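/- arXiv:2102.12688 — 5 statements merged into one kernel-verified Lean document; each statement's English description precedes it below -/
import Mathlib

section
/- For a real number $q$ with $q > 0$ and $q \ne 1$, and for all integers $n \ge 1$ and $r \ge 1$, the $q$-hyperharmonic numbers satisfy $H_n^{(r+1)}(q) = \frac{[n+r]_q}{[r]_q} H_n^{(r)}(q) - \frac{q^{r-1}}{[r]_q} \binom{n+r-1}{r}_q$. -/
/-- The `q`-integer `[n]_q = (1 - q^n)/(1 - q)`. -/
noncomputable def qint (q : ℝ) (n : ℕ) : ℝ := (1 - q ^ n) / (1 - q)

/-- The `q`-factorial `[n]_q! = [n]_q [n-1]_q ⋯ [1]_q`, with `[0]_q! = 1`. -/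
noncomputable def qfact (q : ℝ) : ℕ → ℝ
  | 0 => 1
  | n + 1 => qint q (n + 1) * qfact q n

/-- The `q`-binomial coefficient `C(n,k)_q = [n]_q!/([k]_q! [n-k]_q!)`, equal to `0` for `k > n`. -/
noncomputable def qbinom (q : ℝ) (n k : ℕ) : ℝ :=
  if k ≤ n then qfact q n / (qfact q k * qfact q (n - k)) else 0

/-- The `q`-hyperharmonic numbers: `H_n^{(0)}(q) = 1/(q [n]_q)` and
`H_n^{(r)}(q) = ∑_{j=1}^n q^j H_j^{(r-1)}(q)` for `r ≥ 1` (so `H_0^{(r)}(q) = 0`). -/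
noncomputable def qhyp (q : ℝ) : ℕ → ℕ → ℝ
  | 0, n => 1 / (q * qint q n)
  | r + 1, n => ∑ j ∈ Finset.Icc 1 n, q ^ j * qhyp q r j

section
variable {q : ℝ}

lemma h1q (hq1 : q ≠ 1) : (1:ℝ) - q ≠ 0 := sub_ne_zero.mpr (Ne.symm hq1)

lemma one_sub_pow_ne (hq : 0 < q) (hq1 : q ≠ 1) (k : ℕ) (hk : 1 ≤ k) :
    (1:ℝ) - q ^ k ≠ 0 := by
  rcases lt_or_gt_of_ne hq1 with h | h
  · have : q ^ k < 1 := pow_lt_one₀ hq.le h (by omega)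
    linarith
  · have : 1 < q ^ k := one_lt_pow₀ h (by omega)
    linarith

lemma qint_ne (hq : 0 < q) (hq1 : q ≠ 1) (k : ℕ) (hk : 1 ≤ k) : qint q k ≠ 0 :=
  div_ne_zero (one_sub_pow_ne hq hq1 k hk) (h1q hq1)

lemma qfact_ne (hq : 0 < q) (hq1 : q ≠ 1) (n : ℕ) : qfact q n ≠ 0 := by
  induction n with
  | zero => simp [qfact]
  | succ n ih => exact mul_ne_zero (qint_ne hq hq1 (n+1) (by omega)) ih

lemma qbinom_self (hq : 0 < q) (hq1 : q ≠ 1) (n : ℕ) : qbinom q n n = 1 := by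
  simp [qbinom, qfact, qfact_ne hq hq1 n]

lemma qbinom_one (hq : 0 < q) (hq1 : q ≠ 1) (m : ℕ) : qbinom q (m+1) 1 = qint q (m+1) := by
  have h : qfact q 1 = 1 := by simp [qfact, qint, div_self (h1q hq1)]
  rw [qbinom, if_pos (by omega)]
  simp only [Nat.add_sub_cancel, h, one_mul]
  rw [show qfact q (m+1) = qint q (m+1) * qfact q m from rfl,
    mul_div_assoc, div_self (qfact_ne hq hq1 m), mul_one]

lemma qpascal (hq : 0 < q) (hq1 : q ≠ 1) (k d : ℕ) :
    qbinom q (k+d+2) (k+1) = qbinom q (k+d+1) (k+1) + q^(d+1) * qbinom q (k+d+1) k := by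
  rw [qbinom, qbinom, qbinom, if_pos (by omega), if_pos (by omega), if_pos (by omega)]
  rw [show k+d+2-(k+1) = d+1 by omega, show k+d+1-(k+1) = d by omega,
    show k+d+1-k = d+1 by omega]
  rw [show qfact q (k+d+2) = qint q (k+d+2) * qfact q (k+d+1) from rfl,
    show qfact q (d+1) = qint q (d+1) * qfact q d from rfl,
    show qfact q (k+1) = qint q (k+1) * qfact q k from rfl]
  have hfk := qfact_ne hq hq1 k
  have hfd := qfact_ne hq hq1 d
  have hfkd := qfact_ne hq hq1 (k+d+1)
  have hik := one_sub_pow_ne hq hq1 (k+1) (by omega)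
  have hid := one_sub_pow_ne hq hq1 (d+1) (by omega)
  have h1 := h1q hq1
  simp only [qint]
  field_simp
  ring

lemma qhyp_top (n r : ℕ) :
    qhyp q (r+1) (n+1) = qhyp q (r+1) n + q^(n+1) * qhyp q r (n+1) := by
  rw [qhyp, qhyp, Finset.sum_Icc_succ_top (by omega : 1 ≤ n+1)]

lemma qhyp_one (hq : 0 < q) (hq1 : q ≠ 1) (r : ℕ) : qhyp q r 1 = q ^ r / q := by
  induction r with
  | zero => rw [qhyp]; simp [qint, div_self (h1q hq1)]
  | succ r ih =>
    rw [qhyp]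
    simp only [Finset.Icc_self, Finset.sum_singleton, ih, pow_one]
    field_simp
    ring


lemma qkey (hq : 0 < q) (hq1 : q ≠ 1) : ∀ s n : ℕ,
    qhyp q (s+2) (n+1) =
      qint q (n+s+2) / qint q (s+1) * qhyp q (s+1) (n+1) -
        q^s / qint q (s+1) * qbinom q (n+s+1) (s+1) := by
  intro s
  induction s with
  | zero =>
    intro n
    induction n with
    | zero =>
      rw [qhyp_one hq hq1, qhyp_one hq hq1, qbinom_self hq hq1]
      have h1 := h1q hq1
      have h2 := one_sub_pow_ne hq hq1 2 (by omega)
      have hq0 := hq.ne'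
      simp only [qint]
      field_simp
      linear_combination (-q^2) * (mul_inv_cancel₀ h1)
    | succ n ih =>
      simp only [Nat.zero_add, Nat.add_zero, pow_zero] at ih ⊢
      simp only [show n+1+2 = n+3 by omega, show n+1+1 = n+2 by omega] at ih ⊢
      have e1 : qhyp q 1 (n+1) = qhyp q 1 (n+2) - q^(n+2) * qhyp q 0 (n+2) := by
        rw [qhyp_top (n+1) 0]; ring
      have e0 : qhyp q 0 (n+2) = 1/(q * qint q (n+2)) := rfl
      rw [qhyp_top (n+1) 1, ih, e1, e0,
        show (n:ℕ)+1 = n+1 from rfl]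
      rw [show qbinom q (n+1) 1 = qint q (n+1) from qbinom_one hq hq1 n,
        show qbinom q (n+2) 1 = qint q (n+2) from qbinom_one hq hq1 (n+1)]
      have h1 := h1q hq1
      have h2 := one_sub_pow_ne hq hq1 (n+1) (by omega)
      have h3 := one_sub_pow_ne hq hq1 (n+2) (by omega)
      have h4 := one_sub_pow_ne hq hq1 (n+3) (by omega)
      have hq0 := hq.ne'
      simp only [qint, pow_one]
      field_simp
      ring
  | succ s ihs =>
    intro n
    induction n with
    | zero =>
      simp only [Nat.zero_add, Nat.add_zero] at *
      simp only [show s+1+2 = s+3 by omega, show s+1+1 = s+2 by omega]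
      rw [qhyp_one hq hq1, qhyp_one hq hq1, qbinom_self hq hq1]
      have h1 := h1q hq1
      have h2 := one_sub_pow_ne hq hq1 (s+2) (by omega)
      have h3 := one_sub_pow_ne hq hq1 (s+3) (by omega)
      have hq0 := hq.ne'
      simp only [qint]
      field_simp
      ring
    | succ n ihn =>
      simp only [show n+1+(s+1)+2 = n+s+4 by omega, show n+1+(s+1)+1 = n+s+3 by omega,
        show s+1+2 = s+3 by omega, show s+1+1 = s+2 by omega,
        show n+(s+1)+2 = n+s+3 by omega, show n+(s+1)+1 = n+s+2 by omega] at ihn ⊢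
      have e1 : qhyp q (s+2) (n+1) =
          qhyp q (s+2) (n+2) - q^(n+2) * qhyp q (s+1) (n+2) := by
        rw [qhyp_top (n+1) (s+1)]; ring
      have e2 := ihs (n+1)
      simp only [show n+1+s+2 = n+s+3 by omega, show n+1+s+1 = n+s+2 by omega,
        show n+1+1 = n+2 by omega] at e2
      have e3 : qbinom q (n+s+3) (s+2) =
          qbinom q (n+s+2) (s+2) + q^(n+1) * qbinom q (n+s+2) (s+1) := by
        have := qpascal hq hq1 (s+1) n
        simpa [show s+1+n+2 = n+s+3 by omega, show s+1+n+1 = n+s+2 by omega] using this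
      rw [show qhyp q (s+3) (n+2) = qhyp q (s+3) (n+1) + q^(n+2) * qhyp q (s+2) (n+2) from
          qhyp_top (n+1) (s+2), ihn, e1, e2, e3]
      have h1 := h1q hq1
      have h2 := one_sub_pow_ne hq hq1 (s+1) (by omega)
      have h3 := one_sub_pow_ne hq hq1 (s+2) (by omega)
      have hq0 := hq.ne'
      simp only [qint]
      field_simp
      ring


end

/-- For `q > 0`, `q ≠ 1` and integers `n, r ≥ 1`,
`H_n^{(r+1)}(q) = ([n+r]_q/[r]_q) H_n^{(r)}(q) - (q^{r-1}/[r]_q) C(n+r-1, r)_q`. -/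
theorem qhyp_succ_order (q : ℝ) (hq : 0 < q) (hq1 : q ≠ 1) (n r : ℕ)
    (hn : 1 ≤ n) (hr : 1 ≤ r) :
    qhyp q (r + 1) n =
      qint q (n + r) / qint q r * qhyp q r n -
        q ^ (r - 1) / qint q r * qbinom q (n + r - 1) r := by
  obtain ⟨m, rfl⟩ : ∃ m, n = m + 1 := ⟨n - 1, by omega⟩
  obtain ⟨s, rfl⟩ : ∃ s, r = s + 1 := ⟨r - 1, by omega⟩
  simp only [show m+1+(s+1) = m+s+2 by omega, show m+1+(s+1)-1 = m+s+1 by omega,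
    show s+1-1 = s by omega, show s+1+1 = s+2 by omega]
  exact qkey hq hq1 s m
end

section
/- For a real number $q$ with $0 < q < 1$, the sequence of ratios $H_{n+1}^{(n+1)}(q) / H_n^{(n)}(q)$ converges, and $\lim_{n\to\infty} \frac{H_{n+1}^{(n+1)}(q)}{H_n^{(n)}(q)} = q$. -/
/-- Partial sums of the `q`-harmonic series. -/
noncomputable def qS (q : ℝ) (n : ℕ) : ℝ := ∑ j ∈ Finset.Icc 1 n, q^(j-1) / qint q j

section
variable {q : ℝ} (hq0 : 0 < q) (hq1 : q < 1)
include hq0 hq1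

lemma one_sub_pow_pos (n : ℕ) : 0 < 1 - q ^ (n+1) := by
  have : q ^ (n+1) < 1 := pow_lt_one₀ hq0.le hq1 (Nat.succ_ne_zero n)
  linarith

lemma qint_pos (n : ℕ) : 0 < qint q (n+1) := by
  have h1 := one_sub_pow_pos hq0 hq1 n
  have : (0:ℝ) < 1 - q := by linarith
  exact div_pos h1 this

lemma qfact_pos (n : ℕ) : 0 < qfact q n := by
  induction n with
  | zero => norm_num [qfact]
  | succ k ih => exact mul_pos (qint_pos hq0 hq1 k) ih

lemma qbinom_pos {n k : ℕ} (h : k ≤ n) : 0 < qbinom q n k := by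
  rw [qbinom, if_pos h]
  exact div_pos (qfact_pos hq0 hq1 n)
    (mul_pos (qfact_pos hq0 hq1 k) (qfact_pos hq0 hq1 (n-k)))

lemma P3 (s t : ℕ) :
    qbinom q (s+t+1) (s+1) * qint q (s+1) = qbinom q (s+t) s * qint q (s+t+1) := by
  have h1 : s + 1 ≤ s + t + 1 := by omega
  have h2 : s ≤ s + t := by omega
  rw [qbinom, if_pos h1, qbinom, if_pos h2]
  have e1 : s + t + 1 - (s+1) = t := by omega
  have e2 : s + t - s = t := by omega
  rw [e1, e2]
  have hf : qfact q (s+t+1) = qint q (s+t+1) * qfact q (s+t) := rfl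
  have hs : qfact q (s+1) = qint q (s+1) * qfact q s := rfl
  rw [hf, hs]
  have n1 := (qfact_pos hq0 hq1 (s+t)).ne'
  have n2 := (qfact_pos hq0 hq1 s).ne'
  have n3 := (qfact_pos hq0 hq1 t).ne'
  have n4 := (qint_pos hq0 hq1 s).ne'
  field_simp

lemma qint_key (s t : ℕ) :
    qint q (s+t+2) = q^(t+1) * qint q (s+1) + qint q (t+1) := by
  have hq : (1:ℝ) - q ≠ 0 := by linarith
  simp only [qint]
  field_simp
  ring

lemma P2 (s t : ℕ) :
    qbinom q (s+t+2) (s+1) = q^(t+1) * qbinom q (s+t+1) s + qbinom q (s+t+1) (s+1) := by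
  have h1 : s + 1 ≤ s + t + 2 := by omega
  have h2 : s ≤ s + t + 1 := by omega
  have h3 : s + 1 ≤ s + t + 1 := by omega
  rw [qbinom, if_pos h1, qbinom, if_pos h2, qbinom, if_pos h3]
  have e1 : s + t + 2 - (s+1) = t + 1 := by omega
  have e2 : s + t + 1 - s = t + 1 := by omega
  have e3 : s + t + 1 - (s+1) = t := by omega
  rw [e1, e2, e3]
  have hf : qfact q (s+t+2) = qint q (s+t+2) * qfact q (s+t+1) := rfl
  have hs : qfact q (s+1) = qint q (s+1) * qfact q s := rfl
  have ht : qfact q (t+1) = qint q (t+1) * qfact q t := rfl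
  rw [hf, hs, ht]
  have n1 := (qfact_pos hq0 hq1 (s+t+1)).ne'
  have n2 := (qfact_pos hq0 hq1 s).ne'
  have n3 := (qfact_pos hq0 hq1 t).ne'
  have n4 := (qint_pos hq0 hq1 s).ne'
  have n5 := (qint_pos hq0 hq1 t).ne'
  rw [qint_key hq0 hq1 s t]
  field_simp

lemma qS_succ (n : ℕ) : qS q (n+1) = qS q n + q^n / qint q (n+1) := by
  rw [qS, qS, Finset.sum_Icc_succ_top (by omega : 1 ≤ n+1)]
  norm_num

lemma key_step (s t : ℕ) :
    qbinom q (s+t+2) (s+1) * (qS q (s+t+2) - qS q (s+1)) =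
      qbinom q (s+t+1) (s+1) * (qS q (s+t+1) - qS q (s+1)) +
      q^(t+1) * (qbinom q (s+t+1) s * (qS q (s+t+1) - qS q s)) := by
  have hD2 : (0:ℝ) < qint q (s+t+2) := by
    simpa [show s+t+1+1 = s+t+2 from by omega] using qint_pos hq0 hq1 (s+t+1)
  have hE := (qint_pos hq0 hq1 s).ne'
  have hP2 := P2 hq0 hq1 s t
  have hP3 : qbinom q (s+t+2) (s+1) * qint q (s+1) = qbinom q (s+t+1) s * qint q (s+t+2) := by
    simpa [show s+(t+1)+1 = s+t+2 from by omega, show s+(t+1) = s+t+1 from by omega]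
      using P3 hq0 hq1 s (t+1)
  have L1 : qbinom q (s+t+2) (s+1) * (q^(s+t+1)/qint q (s+t+2)) =
      q^(t+1) * (qbinom q (s+t+1) s * (q^s/qint q (s+1))) := by
    rw [mul_div_assoc', mul_div_assoc', mul_div_assoc']
    rw [div_eq_div_iff hD2.ne' hE]
    linear_combination q^(s+t+1) * hP3
  have hSm := qS_succ hq0 hq1 (s+t+1)
  have hSs := qS_succ hq0 hq1 s
  have e2 : s + t + 1 + 1 = s + t + 2 := by omega
  rw [e2] at hSm
  rw [hSm, hSs]
  linear_combination (qS q (s+t+1) - qS q s - q^s/qint q (s+1)) * hP2 + L1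

lemma qbinom_zero (n : ℕ) : qbinom q n 0 = 1 := by
  rw [qbinom, if_pos (Nat.zero_le n)]
  have : qfact q 0 = 1 := rfl
  rw [Nat.sub_zero, this, one_mul, div_self (qfact_pos hq0 hq1 n).ne']

/-- Closed form: `H_n^{(r+1)}(q) = C(n+r,r)_q (H_{n+r}(q) - H_r(q))`. -/
lemma qhyp_closed (r n : ℕ) :
    qhyp q (r+1) n = qbinom q (n+r) r * (qS q (n+r) - qS q r) := by
  induction r generalizing n with
  | zero =>
    have : qhyp q 1 n = ∑ j ∈ Finset.Icc 1 n, q ^ j * qhyp q 0 j := rfl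
    rw [this]
    simp only [Nat.add_zero, qbinom_zero hq0 hq1, one_mul]
    have h0 : qS q 0 = 0 := by simp [qS]
    rw [h0, sub_zero, qS]
    refine Finset.sum_congr rfl fun j hj => ?_
    have hj1 : 1 ≤ j := (Finset.mem_Icc.mp hj).1
    obtain ⟨i, rfl⟩ := Nat.exists_eq_add_of_le hj1
    have : qhyp q 0 (1+i) = 1 / (q * qint q (1+i)) := rfl
    rw [this]
    have hq' : q ≠ 0 := hq0.ne'
    have : (1:ℕ) + i - 1 = i := by omega
    rw [this, pow_add, pow_one, mul_one_div, mul_div_mul_left _ _ hq']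
  | succ r ih =>
    induction n with
    | zero =>
      have : qhyp q (r+2) 0 = ∑ j ∈ Finset.Icc 1 0, q ^ j * qhyp q (r+1) j := rfl
      rw [this]
      simp
    | succ n ihn =>
      have hsum : qhyp q (r+2) (n+1) = qhyp q (r+2) n + q^(n+1) * qhyp q (r+1) (n+1) := by
        have h1 : qhyp q (r+2) (n+1) = ∑ j ∈ Finset.Icc 1 (n+1), q ^ j * qhyp q (r+1) j := rfl
        have h2 : qhyp q (r+2) n = ∑ j ∈ Finset.Icc 1 n, q ^ j * qhyp q (r+1) j := rfl
        rw [h1, h2, Finset.sum_Icc_succ_top (by omega : 1 ≤ n+1)]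
      rw [hsum, ihn, ih (n+1)]
      have e1 : n + 1 + (r + 1) = r + n + 2 := by omega
      have e2 : n + (r + 1) = r + n + 1 := by omega
      have e3 : n + 1 + r = r + n + 1 := by omega
      rw [e1, e2, e3]
      exact (key_step hq0 hq1 r n).symm

lemma term_eq (i : ℕ) : q^(i+1-1) / qint q (i+1) = q^i * (1-q) / (1-q^(i+1)) := by
  simp only [Nat.add_sub_cancel, qint]
  rw [div_div_eq_mul_div]

lemma T_eq (k : ℕ) : qS q (2*k+1) - qS q k = ∑ j ∈ Finset.Ico (k+1) (2*k+2), q^(j-1) / qint q j := by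
  have h1 : qS q (2*k+1) = ∑ j ∈ Finset.Ico 1 (2*k+2), q^(j-1) / qint q j := by
    rw [qS, ← Finset.Ico_add_one_right_eq_Icc]
    rfl
  have h2 : qS q k = ∑ j ∈ Finset.Ico 1 (k+1), q^(j-1) / qint q j := by
    rw [qS, ← Finset.Ico_add_one_right_eq_Icc]
  rw [h1, h2, ← Finset.sum_Ico_consecutive _ (by omega : 1 ≤ k+1) (by omega : k+1 ≤ 2*k+2)]
  ring

lemma geo_eval (k : ℕ) : ∑ j ∈ Finset.Ico (k+1) (2*k+2), q^(j-1) = q^k * ((1-q^(k+1))/(1-q)) := by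
  rw [Finset.sum_Ico_eq_sum_range]
  have e : 2*k+2 - (k+1) = k+1 := by omega
  rw [e]
  have : ∀ i, q^(k+1+i-1) = q^k * q^i := by
    intro i
    have : k+1+i-1 = k+i := by omega
    rw [this, pow_add]
  simp_rw [this]
  rw [← Finset.mul_sum, geom_sum_eq (by linarith : q ≠ 1)]
  congr 1
  rw [div_eq_div_iff (by intro h; apply (by linarith : q ≠ 1); linarith) (by linarith : (1:ℝ)-q ≠ 0)]
  ring

lemma T_lower (k : ℕ) : q^k * (1-q^(k+1)) ≤ qS q (2*k+1) - qS q k := by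
  rw [T_eq hq0 hq1 k]
  have hrw : q^k * (1-q^(k+1)) = ∑ j ∈ Finset.Ico (k+1) (2*k+2), q^(j-1) * (1-q) := by
    rw [← Finset.sum_mul, geo_eval hq0 hq1 k]
    have hq' : (1:ℝ) - q ≠ 0 := by linarith
    field_simp
  rw [hrw]
  refine Finset.sum_le_sum fun j hj => ?_
  obtain ⟨i, rfl⟩ : ∃ i, j = i + 1 := ⟨j - 1, by have := (Finset.mem_Ico.mp hj).1; omega⟩
  rw [term_eq hq0 hq1 i]
  simp only [Nat.add_sub_cancel]
  rw [le_div_iff₀ (one_sub_pow_pos hq0 hq1 i)]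
  have h1 : q^(i+1) > 0 := pow_pos hq0 _
  have h2 : (0:ℝ) ≤ q^i * (1-q) := mul_nonneg (pow_nonneg hq0.le i) (by linarith)
  nlinarith

lemma T_upper (k : ℕ) : qS q (2*k+1) - qS q k ≤ q^k := by
  rw [T_eq hq0 hq1 k]
  have hrw : (q:ℝ)^k = ∑ j ∈ Finset.Ico (k+1) (2*k+2), q^(j-1) * ((1-q)/(1-q^(k+1))) := by
    rw [← Finset.sum_mul, geo_eval hq0 hq1 k]
    have hq' : (1:ℝ) - q ≠ 0 := by linarith
    have h2 := (one_sub_pow_pos hq0 hq1 k).ne'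
    field_simp
  rw [hrw]
  refine Finset.sum_le_sum fun j hj => ?_
  obtain ⟨i, rfl⟩ : ∃ i, j = i + 1 := ⟨j - 1, by have := (Finset.mem_Ico.mp hj).1; omega⟩
  rw [term_eq hq0 hq1 i]
  simp only [Nat.add_sub_cancel]
  rw [mul_div_assoc]
  refine mul_le_mul_of_nonneg_left ?_ (pow_nonneg hq0.le i)
  refine div_le_div_of_nonneg_left (by linarith) (one_sub_pow_pos hq0 hq1 k) ?_
  have hle : k + 1 ≤ i + 1 := (Finset.mem_Ico.mp hj).1
  have := pow_le_pow_of_le_one hq0.le hq1.le hle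
  linarith

lemma T_pos (k : ℕ) : 0 < qS q (2*k+1) - qS q k :=
  lt_of_lt_of_le (mul_pos (pow_pos hq0 k) (one_sub_pow_pos hq0 hq1 k)) (T_lower hq0 hq1 k)

lemma v_tendsto : Filter.Tendsto (fun k => (qS q (2*k+1) - qS q k) / q^k)
    Filter.atTop (nhds 1) := by
  have hpow : Filter.Tendsto (fun k : ℕ => q^(k+1)) Filter.atTop (nhds 0) := by
    have h := tendsto_pow_atTop_nhds_zero_of_lt_one hq0.le hq1
    simpa [pow_succ] using h.mul_const q
  have hlow : Filter.Tendsto (fun k : ℕ => 1 - q^(k+1)) Filter.atTop (nhds 1) := by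
    simpa using (tendsto_const_nhds (x := (1:ℝ))).sub hpow
  refine tendsto_of_tendsto_of_tendsto_of_le_of_le hlow tendsto_const_nhds
    (fun k => ?_) (fun k => ?_)
  · rw [le_div_iff₀ (pow_pos hq0 k)]
    have := T_lower hq0 hq1 k; linarith [this]
  · rw [div_le_one (pow_pos hq0 k)]
    exact T_upper hq0 hq1 k

lemma hdiag (k : ℕ) :
    qhyp q (k+1) (k+1) = qbinom q (2*k+1) k * (qS q (2*k+1) - qS q k) := by
  have h := qhyp_closed hq0 hq1 k (k+1)
  simpa [show k+1+k = 2*k+1 from by omega] using h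

lemma hCC (k : ℕ) :
    qbinom q (2*k+3) (k+1) * (qint q (k+1) * qint q (k+2)) =
      qbinom q (2*k+1) k * (qint q (2*k+2) * qint q (2*k+3)) := by
  have h1 : k + 1 ≤ 2*k+3 := by omega
  have h2 : k ≤ 2*k+1 := by omega
  rw [qbinom, if_pos h1, qbinom, if_pos h2]
  have e1 : 2*k+3 - (k+1) = k+2 := by omega
  have e2 : 2*k+1 - k = k+1 := by omega
  rw [e1, e2]
  have ha : qfact q (2*k+3) = qint q (2*k+3) * (qint q (2*k+2) * qfact q (2*k+1)) := rfl
  have hb : qfact q (k+2) = qint q (k+2) * (qint q (k+1) * qfact q k) := rfl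
  have hc : qfact q (k+1) = qint q (k+1) * qfact q k := rfl
  rw [ha, hb, hc]
  have n1 := (qfact_pos hq0 hq1 (2*k+1)).ne'
  have n2 := (qfact_pos hq0 hq1 k).ne'
  have n3 := (qint_pos hq0 hq1 k).ne'
  have n4 := (qint_pos hq0 hq1 (k+1)).ne'
  field_simp

lemma ratio_eq (k : ℕ) :
    qhyp q (k+2) (k+2) / qhyp q (k+1) (k+1) =
      (qint q (2*k+2) * qint q (2*k+3) / (qint q (k+1) * qint q (k+2))) *
      (q * (((qS q (2*(k+1)+1) - qS q (k+1)) / q^(k+1)) /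
        ((qS q (2*k+1) - qS q k) / q^k))) := by
  have hd1 := hdiag hq0 hq1 (k+1)
  have hd0 := hdiag hq0 hq1 k
  have e1 : 2*(k+1)+1 = 2*k+3 := by omega
  rw [hd1, hd0, e1]
  set C1 := qbinom q (2*k+3) (k+1) with hC1
  set C0 := qbinom q (2*k+1) k with hC0
  set T1 := qS q (2*k+3) - qS q (k+1) with hT1
  set T0 := qS q (2*k+1) - qS q k with hT0
  have hT0p : 0 < T0 := T_pos hq0 hq1 k
  have hT1p : 0 < T1 := by
    have := T_pos hq0 hq1 (k+1); rw [e1] at this; exact this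
  have hC0p : 0 < C0 := qbinom_pos hq0 hq1 (by omega : k ≤ 2*k+1)
  have hI1 := qint_pos hq0 hq1 k
  have hI2 := qint_pos hq0 hq1 (k+1)
  have hI22 : 0 < qint q (2*k+2) := by
    simpa [show 2*k+1+1 = 2*k+2 from by omega] using qint_pos hq0 hq1 (2*k+1)
  have hI23 : 0 < qint q (2*k+3) := by
    simpa [show 2*k+2+1 = 2*k+3 from by omega] using qint_pos hq0 hq1 (2*k+2)
  have step1 : C1 * T1 / (C0 * T0) = (C1 / C0) * (T1 / T0) := by
    rw [div_mul_div_comm]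
  have step2 : C1 / C0 = qint q (2*k+2) * qint q (2*k+3) / (qint q (k+1) * qint q (k+2)) := by
    rw [div_eq_div_iff hC0p.ne' (by positivity)]
    linear_combination hCC hq0 hq1 k
  have step3 : q * ((T1 / q^(k+1)) / (T0 / q^k)) = T1 / T0 := by
    have hqk : (q:ℝ)^k ≠ 0 := (pow_pos hq0 k).ne'
    field_simp
    ring
  rw [step1, step2, step3]

end

/-- For `0 < q < 1`, the ratio `H_{n+1}^{(n+1)}(q) / H_n^{(n)}(q)` tends to `q` as `n → ∞`. -/
theorem qhyp_diag_ratio_tendsto (q : ℝ) (hq0 : 0 < q) (hq1 : q < 1) :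
    Filter.Tendsto (fun n : ℕ => qhyp q (n + 1) (n + 1) / qhyp q n n)
      Filter.atTop (nhds q) := by
  have hq' : (1:ℝ) - q ≠ 0 := by linarith
  -- limit of q-integers
  have hI : Filter.Tendsto (fun n : ℕ => qint q (n+1)) Filter.atTop (nhds (1/(1-q))) := by
    have hpow : Filter.Tendsto (fun k : ℕ => q^(k+1)) Filter.atTop (nhds 0) := by
      have h := tendsto_pow_atTop_nhds_zero_of_lt_one hq0.le hq1
      simpa [pow_succ] using h.mul_const q
    have hlow : Filter.Tendsto (fun k : ℕ => 1 - q^(k+1)) Filter.atTop (nhds 1) := by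
      simpa using (tendsto_const_nhds (x := (1:ℝ))).sub hpow
    have := hlow.div_const (1-q)
    simpa [qint] using this
  have hshift : ∀ c : ℕ, Filter.Tendsto (fun k : ℕ => (k+c : ℕ)) Filter.atTop Filter.atTop :=
    fun c => Filter.tendsto_atTop_atTop.mpr fun b => ⟨b, fun a ha => by omega⟩
  have hmul2 : ∀ c : ℕ, Filter.Tendsto (fun k : ℕ => (2*k+c : ℕ)) Filter.atTop Filter.atTop :=
    fun c => Filter.tendsto_atTop_atTop.mpr fun b => ⟨b, fun a ha => by omega⟩
  have h22 : Filter.Tendsto (fun k : ℕ => qint q (2*k+2)) Filter.atTop (nhds (1/(1-q))) := by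
    have := hI.comp (hmul2 1)
    exact this.congr fun k => by norm_num [Function.comp]
  have h23 : Filter.Tendsto (fun k : ℕ => qint q (2*k+3)) Filter.atTop (nhds (1/(1-q))) := by
    have := hI.comp (hmul2 2)
    exact this.congr fun k => by norm_num [Function.comp]
  have h2 : Filter.Tendsto (fun k : ℕ => qint q (k+2)) Filter.atTop (nhds (1/(1-q))) := by
    have := hI.comp (hshift 1)
    exact this.congr fun k => by norm_num [Function.comp]
  have hv := v_tendsto hq0 hq1
  have hv1 : Filter.Tendsto (fun k => (qS q (2*(k+1)+1) - qS q (k+1)) / q^(k+1))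
      Filter.atTop (nhds 1) := by
    have := hv.comp (hshift 1)
    exact this.congr fun k => rfl
  have hLne : (1/(1-q) : ℝ) * (1/(1-q)) ≠ 0 := by
    have : (0:ℝ) < 1 - q := by linarith
    positivity
  have hg : Filter.Tendsto
      (fun k : ℕ => (qint q (2*k+2) * qint q (2*k+3) / (qint q (k+1) * qint q (k+2))) *
        (q * (((qS q (2*(k+1)+1) - qS q (k+1)) / q^(k+1)) /
          ((qS q (2*k+1) - qS q k) / q^k))))
      Filter.atTop (nhds (((1/(1-q)) * (1/(1-q)) / ((1/(1-q)) * (1/(1-q)))) * (q * (1/1)))) :=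
    (((h22.mul h23).div (hI.mul h2) hLne)).mul
      ((tendsto_const_nhds (x := q)).mul (hv1.div hv one_ne_zero))
  have hval : ((1/(1-q) : ℝ) * (1/(1-q)) / ((1/(1-q)) * (1/(1-q)))) * (q * (1/1)) = q := by
    field_simp
  rw [hval] at hg
  have key : Filter.Tendsto (fun k : ℕ => qhyp q (k+2) (k+2) / qhyp q (k+1) (k+1))
      Filter.atTop (nhds q) :=
    hg.congr fun k => (ratio_eq hq0 hq1 k).symm
  have hcomp : Filter.Tendsto (fun n : ℕ => qhyp q ((n-1)+2) ((n-1)+2) / qhyp q ((n-1)+1) ((n-1)+1))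
      Filter.atTop (nhds q) := key.comp (Filter.tendsto_sub_atTop_nat 1)
  refine hcomp.congr' ?_
  filter_upwards [Filter.eventually_ge_atTop 1] with n hn
  have e1 : n - 1 + 2 = n + 1 := by omega
  have e2 : n - 1 + 1 = n := by omega
  rw [e1, e2]
end

section
/- For all positive integers $n$ and $r$, $\sum_{\ell=1}^{n} \ell\, H_{\ell}^{(r)} = \frac{n(n+r)}{r+1} H_n^{(r)} - \frac{(n-1)^{(r+1)}}{(r-1)!\,(r+1)^2}$, and this quantity also equals $\frac{n r}{r+1} H_n^{(r+1)} + \frac{1}{r+1} \binom{n+r}{r+1}$, where $(x)^{(m)} = x(x+1)\cdots(x+m-1)$ denotes the rising factorial with $(x)^{(0)} = 1$. -/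
/-- The harmonic number `H_n = ∑_{j=1}^n 1/j`. -/
noncomputable def harm (n : ℕ) : ℝ := ∑ j ∈ Finset.Icc 1 n, (1 : ℝ) / j

/-- The hyperharmonic numbers: `H_n^{(1)} = H_n` and
`H_n^{(r)} = ∑_{ℓ=1}^n H_ℓ^{(r-1)}` for `r ≥ 2` (so `H_0^{(r)} = 0`). -/
noncomputable def hyp : ℕ → ℕ → ℝ
  | 0, _ => 0
  | 1, n => harm n
  | r + 2, n => ∑ ℓ ∈ Finset.Icc 1 n, hyp (r + 1) ℓ

/-- The rising factorial `(x)^{(m)} = x (x+1) ⋯ (x+m-1)`, with `(x)^{(0)} = 1`. -/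
noncomputable def rise (x : ℝ) (m : ℕ) : ℝ := ∏ i ∈ Finset.range m, (x + i)

lemma hyp_zero (r : ℕ) : hyp r 0 = 0 := by
  match r with
  | 0 => rfl
  | 1 => simp [hyp, harm]
  | r + 2 => simp [hyp]

lemma hyp_one (r : ℕ) : hyp (r + 1) 1 = 1 := by
  induction r with
  | zero => simp [hyp, harm]
  | succ r ih => simp [hyp, ih]

lemma hyp_succ (r n : ℕ) : hyp (r + 2) (n + 1) = hyp (r + 2) n + hyp (r + 1) (n + 1) := by
  show (∑ ℓ ∈ Finset.Icc 1 (n+1), hyp (r + 1) ℓ) = _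
  rw [Finset.sum_Icc_succ_top (by omega)]
  rfl

lemma harm_succ (n : ℕ) : harm (n + 1) = harm n + 1 / (n + 1) := by
  unfold harm
  rw [Finset.sum_Icc_succ_top (by omega)]
  push_cast
  ring

lemma key : ∀ r m : ℕ, ((m : ℝ) + 1) * hyp (r + 1) (m + 1) =
    ((r : ℝ) + 1) * hyp (r + 2) m + ((m + r + 1).choose (r + 1) : ℝ) := by
  intro r
  induction r with
  | zero =>
    intro m
    induction m with
    | zero => simp [hyp_one, hyp_zero]
    | succ m ih =>
      have h2 : hyp 2 (m + 1) = hyp 2 m + harm (m + 1) := hyp_succ 0 m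
      have e : ((m : ℝ) + 2) * hyp 1 (m + 2) = ((m : ℝ) + 2) * harm (m + 1) + 1 := by
        show ((m : ℝ) + 2) * harm (m + 2) = _
        rw [harm_succ (m + 1)]
        push_cast
        field_simp
        ring
      have h1 : hyp 1 = harm := rfl
      norm_num [Nat.choose_one_right, h1] at ih e ⊢
      linear_combination e - h2 + ih
  | succ r ihr =>
    intro m
    induction m with
    | zero =>
      simp [hyp_one, hyp_zero, Nat.choose_self]
    | succ m ihm =>
      have ihr' := ihr (m + 1)
      have pas : ((m + 1 + (r + 1) + 1).choose (r + 1 + 1) : ℝ) =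
          ((m + r + 2).choose (r + 1) : ℝ) + ((m + r + 2).choose (r + 2) : ℝ) := by
        rw [show m + 1 + (r + 1) + 1 = (m + r + 2) + 1 from by omega]
        rw [Nat.choose_succ_succ]
        push_cast
        ring
      rw [show m + 1 + r + 1 = m + r + 2 from by omega] at ihr'
      rw [show m + (r + 1) + 1 = m + r + 2 from by omega] at ihm
      rw [pas]
      rw [show r + 1 + 1 = r + 2 from rfl, show r + 1 + 2 = r + 3 from rfl,
        show m + 1 + 1 = m + 2 from rfl]
      rw [hyp_succ r (m + 1), hyp_succ (r + 1) m]
      rw [show r + 1 + 1 = r + 2 from rfl, show r + 1 + 2 = r + 3 from rfl] at ihm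
      push_cast at ihm ihr' ⊢
      linear_combination ihm + ihr'

lemma Bmul (r : ℕ) : ∀ n : ℕ, ((r : ℝ) + 2) * ∑ ℓ ∈ Finset.Icc 1 n, (ℓ : ℝ) * hyp (r + 1) ℓ =
    (n : ℝ) * ((r : ℝ) + 1) * hyp (r + 2) n + ((n + r + 1).choose (r + 2) : ℝ) := by
  intro n
  induction n with
  | zero =>
    simp [hyp_zero, Nat.choose_eq_zero_of_lt (by omega : r + 1 < r + 2)]
  | succ n ih =>
    rw [Finset.sum_Icc_succ_top (by omega : 1 ≤ n + 1)]
    rw [hyp_succ r n]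
    have pas : ((n + 1 + r + 1).choose (r + 2) : ℝ) =
        ((n + r + 1).choose (r + 1) : ℝ) + ((n + r + 1).choose (r + 2) : ℝ) := by
      rw [show n + 1 + r + 1 = (n + r + 1) + 1 from by omega, Nat.choose_succ_succ]
      push_cast; ring
    rw [pas]
    have k := key r n
    push_cast at *
    linear_combination ih + k

lemma riselem (m : ℕ) : ∀ k : ℕ, rise (m : ℝ) k = (Nat.ascFactorial m k : ℝ) := by
  intro k
  induction k with
  | zero => simp [rise]
  | succ k ih =>
    rw [rise, Finset.prod_range_succ, ← rise, ih, Nat.ascFactorial_succ]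
    push_cast
    ring

/-- For positive integers `n, r`,
`∑_{ℓ=1}^n ℓ H_ℓ^{(r)}
   = (n(n+r)/(r+1)) H_n^{(r)} - (n-1)^{(r+1)} / ((r-1)! (r+1)²)
   = (nr/(r+1)) H_n^{(r+1)} + (1/(r+1)) C(n+r, r+1)`. -/
theorem sum_mul_hyp (n r : ℕ) (hn : 1 ≤ n) (hr : 1 ≤ r) :
    (∑ ℓ ∈ Finset.Icc 1 n, (ℓ : ℝ) * hyp r ℓ =
      (n : ℝ) * (n + r) / (r + 1) * hyp r n -
        rise ((n : ℝ) - 1) (r + 1) / ((Nat.factorial (r - 1) : ℝ) * (r + 1) ^ 2)) ∧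
    (∑ ℓ ∈ Finset.Icc 1 n, (ℓ : ℝ) * hyp r ℓ =
      (n : ℝ) * r / (r + 1) * hyp (r + 1) n +
        1 / (r + 1) * ((n + r).choose (r + 1) : ℝ)) := by
  obtain ⟨r, rfl⟩ : ∃ r', r = r' + 1 := ⟨r - 1, by omega⟩
  obtain ⟨m, rfl⟩ : ∃ m, n = m + 1 := ⟨n - 1, by omega⟩
  have hr2 : ((r : ℝ) + 2) ≠ 0 := by positivity
  have B := Bmul r (m + 1)
  rw [show m + 1 + (r + 1) = m + 1 + r + 1 from by omega, show r + 1 + 1 = r + 2 from rfl]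
  have hB2 : ∑ ℓ ∈ Finset.Icc 1 (m + 1), (ℓ : ℝ) * hyp (r + 1) ℓ =
      ((m : ℝ) + 1) * ((r : ℝ) + 1) / ((r : ℝ) + 2) * hyp (r + 2) (m + 1) +
        1 / ((r : ℝ) + 2) * ((m + 1 + r + 1).choose (r + 2) : ℝ) := by
    push_cast at B ⊢
    field_simp
    linear_combination B
  constructor
  · have hF : ((Nat.factorial r : ℕ) : ℝ) ≠ 0 := by
      exact_mod_cast Nat.factorial_ne_zero r
    have hrise : rise (((m + 1 : ℕ) : ℝ) - 1) (r + 2) =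
        ((r + 2).factorial : ℝ) * ((m + r + 1).choose (r + 2) : ℝ) := by
      rw [show (((m + 1 : ℕ) : ℝ)) - 1 = (m : ℝ) from by push_cast; ring]
      rw [riselem m (r + 2), Nat.ascFactorial_eq_factorial_mul_choose']
      rw [show m + (r + 2) - 1 = m + r + 1 from by omega]
      push_cast
      ring
    have kfact : (((r + 2).factorial : ℕ) : ℝ) =
        ((r : ℝ) + 2) * ((r : ℝ) + 1) * (Nat.factorial r : ℝ) := by
      rw [show r + 2 = (r + 1) + 1 from rfl, Nat.factorial_succ, Nat.factorial_succ]
      push_cast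
      ring
    have k1 := key r m
    have k2 := hyp_succ r m
    have k4 : ((m + r + 1).choose (r + 2) : ℝ) * ((r : ℝ) + 2) =
        ((m + r + 1).choose (r + 1) : ℝ) * (m : ℝ) := by
      have := Nat.choose_succ_right_eq (m + r + 1) (r + 1)
      rw [show m + r + 1 - (r + 1) = m from by omega] at this
      exact_mod_cast this
    have pas : ((m + 1 + r + 1).choose (r + 2) : ℝ) =
        ((m + r + 1).choose (r + 1) : ℝ) + ((m + r + 1).choose (r + 2) : ℝ) := by
      rw [show m + 1 + r + 1 = (m + r + 1) + 1 from by omega, Nat.choose_succ_succ]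
      push_cast; ring
    rw [hB2, show r + 1 - 1 = r from rfl, hrise, kfact, pas]
    push_cast at k1 k2 ⊢
    have hfrac : ((r : ℝ) + 2) * ((r : ℝ) + 1) * (Nat.factorial r : ℝ) * ((m + r + 1).choose (r + 2) : ℝ) /
        ((Nat.factorial r : ℝ) * ((r : ℝ) + 2) ^ 2) =
        ((r : ℝ) + 1) * ((m + r + 1).choose (r + 2) : ℝ) / ((r : ℝ) + 2) := by
      rw [div_eq_div_iff (by positivity) hr2]
      ring
    rw [show ((r : ℝ) + 1 + 1) = (r : ℝ) + 2 from by ring] at *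
    rw [hfrac]
    field_simp
    linear_combination ((m : ℝ) + 1) * ((r : ℝ) + 1) * k2 - ((m : ℝ) + 1) * k1 + k4
  · rw [hB2]
    push_cast
    ring
end

section
/- For all positive integers $n$, $r$, $p$, $\sum_{\ell=1}^{n} \ell^{p} H_{\ell}^{(r)} = A(p,r,n) H_n^{(r)} - B(p,r,n)$, where $A(p,r,n) = \sum_{\ell=0}^{p} S(p,\ell)\, \ell!\, \binom{n+r-1}{r-1}^{-1} \binom{r+\ell-1}{\ell} \binom{r+n}{r+\ell}$ and $B(p,r,n) = \sum_{\ell=0}^{p} \frac{1}{r+\ell} S(p,\ell)\, \ell!\, \binom{r+\ell-1}{\ell} \binom{r+n-1}{r+\ell}$, and $S(p,\ell)$ denotes the Stirling numbers of the second kind. -/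
/-- The Stirling numbers of the second kind `S(n,m)` (number of partitions of an
`n`-set into `m` nonempty blocks), via `S(n+1, m+1) = S(n, m) + (m+1) S(n, m+1)`. -/
def stirS : ℕ → ℕ → ℕ
  | 0, 0 => 1
  | 0, _ + 1 => 0
  | _ + 1, 0 => 0
  | n + 1, m + 1 => stirS n m + (m + 1) * stirS n (m + 1)

/-- `A(p,r,n) = ∑_{ℓ=0}^p S(p,ℓ) ℓ! C(n+r-1, r-1)⁻¹ C(r+ℓ-1, ℓ) C(r+n, r+ℓ)`. -/
noncomputable def Acoef (p r n : ℕ) : ℝ :=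
  ∑ ℓ ∈ Finset.range (p + 1),
    (stirS p ℓ : ℝ) * (Nat.factorial ℓ : ℝ) * ((n + r - 1).choose (r - 1) : ℝ)⁻¹ *
      ((r + ℓ - 1).choose ℓ : ℝ) * ((r + n).choose (r + ℓ) : ℝ)

/-- `B(p,r,n) = ∑_{ℓ=0}^p (1/(r+ℓ)) S(p,ℓ) ℓ! C(r+ℓ-1, ℓ) C(r+n-1, r+ℓ)`. -/
noncomputable def Bcoef (p r n : ℕ) : ℝ :=
  ∑ ℓ ∈ Finset.range (p + 1),
    (1 / (r + ℓ : ℝ)) * (stirS p ℓ : ℝ) * (Nat.factorial ℓ : ℝ) *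
      ((r + ℓ - 1).choose ℓ : ℝ) * ((r + n - 1).choose (r + ℓ) : ℝ)

open Finset

/-- `hg s n = H_{n+s} - H_s = ∑_{j=s+1}^{n+s} 1/j`. -/
noncomputable def hg (s n : ℕ) : ℝ := ∑ j ∈ Finset.Icc (s+1) (n+s), (1:ℝ)/j

lemma hg_zero (s : ℕ) : hg s 0 = 0 := by
  unfold hg
  rw [Finset.Icc_eq_empty (by omega)]
  simp

lemma hg_succ (s n : ℕ) : hg s (n+1) = hg s n + 1/((n:ℝ)+s+1) := by
  unfold hg
  rw [show n+1+s = (n+s)+1 by ring, Finset.sum_Icc_succ_top (by omega)]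
  push_cast
  ring

lemma hg_shift (s n : ℕ) : hg s (n+1) = hg (s+1) n + 1/((s:ℝ)+1) := by
  unfold hg
  rw [show n+1+s = n+(s+1) by ring, ← Finset.insert_Icc_add_one_left_eq_Icc (by omega),
    Finset.sum_insert (by simp)]
  push_cast
  ring

lemma hyp_two (s n : ℕ) : hyp (s+2) n = ∑ ℓ ∈ Finset.Icc 1 n, hyp (s+1) ℓ := rfl

lemma hyp_closed : ∀ s n : ℕ, hyp (s+1) n = ((n+s).choose s : ℝ) * hg s n := by
  intro s
  induction s with
  | zero =>
    intro n
    show harm n = _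
    simp only [harm, hg, Nat.choose_zero_right, Nat.cast_one, one_mul, Nat.add_zero]
  | succ s ih =>
    intro n
    induction n with
    | zero =>
      rw [hyp_two, hg_zero]
      simp
    | succ n ihn =>
      rw [hyp_two] at ihn ⊢
      rw [Finset.sum_Icc_succ_top (by omega), ihn, ih (n+1), hg_succ (s+1) n,
        hg_shift s n, show n+1+s = n+s+1 by ring, show n + (s+1) = n+s+1 by ring,
        show n+1+(s+1) = (n+s+1)+1 by ring]
      rw [show ((n+s+1)+1).choose (s+1) = (n+s+1).choose s + (n+s+1).choose (s+1) from
        Nat.choose_succ_succ _ _]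
      have key2 : (n+s+1+1) * ((n+s+1).choose s)
          = ((n+s+1).choose s + (n+s+1).choose (s+1)) * (s+1) := by
        rw [← Nat.choose_succ_succ]
        exact Nat.add_one_mul_choose_eq (n+s+1) s
      have h1 : ((s:ℝ)+1) ≠ 0 := by positivity
      have h2 : ((n:ℝ)+(s+1)+1) ≠ 0 := by positivity
      have hq : (((n+s+1).choose s : ℝ))/((s:ℝ)+1)
          = ((((n+s+1).choose s : ℝ)) + (((n+s+1).choose (s+1) : ℝ)))/((n:ℝ)+(s+1)+1) := by
        rw [div_eq_div_iff h1 h2]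
        have := congrArg (Nat.cast : ℕ → ℝ) key2
        push_cast at this
        linarith [this]
      push_cast
      linear_combination hq

lemma key_sum (s k : ℕ) : ∀ n : ℕ,
    ∑ ℓ ∈ Finset.Icc 1 n, ((ℓ+s).choose (s+k) : ℝ) * hg s ℓ
      = ((s+1+n).choose (s+1+k) : ℝ) * hg s n
        - (1/((s:ℝ)+1+k)) * ((s+n).choose (s+1+k) : ℝ) := by
  intro n
  induction n with
  | zero =>
    rw [hg_zero]
    rw [Nat.choose_eq_zero_of_lt (by omega : s+0 < s+1+k)]
    simp
  | succ n ihn =>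
    rw [Finset.sum_Icc_succ_top (by omega), ihn, hg_succ s n,
      show n+1+s = s+n+1 by ring, show s+1+(n+1) = (s+n+1)+1 by ring,
      show s+(n+1) = s+n+1 by ring, show s+1+n = s+n+1 by ring,
      show s+1+k = (s+k)+1 by ring]
    rw [show ((s+n+1)+1).choose ((s+k)+1)
        = (s+n+1).choose (s+k) + (s+n+1).choose ((s+k)+1) from Nat.choose_succ_succ _ _]
    have hp2 : ((s+n+1).choose ((s+k)+1) : ℝ)
        = ((s+n).choose (s+k) : ℝ) + ((s+n).choose ((s+k)+1) : ℝ) := by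
      exact_mod_cast congrArg (Nat.cast : ℕ → ℝ)
        (Nat.choose_succ_succ (s+n) (s+k))
    have h1 : ((s:ℝ)+1+k) ≠ 0 := by positivity
    have h2 : ((n:ℝ)+s+1) ≠ 0 := by positivity
    have hq : ((s+n+1).choose ((s+k)+1) : ℝ)/((n:ℝ)+s+1)
        = ((s+n).choose (s+k) : ℝ)/((s:ℝ)+1+k) := by
      rw [div_eq_div_iff h2 h1]
      have := congrArg (Nat.cast : ℕ → ℝ) (Nat.add_one_mul_choose_eq (s+n) (s+k))
      push_cast at this ⊢
      linarith [this]
    push_cast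
    push_cast at hp2 hq
    linear_combination (1/((s:ℝ)+1+(k:ℝ))) * hp2 - hq

lemma stirS_eq_zero : ∀ p k : ℕ, p < k → stirS p k = 0 := by
  intro p
  induction p with
  | zero => intro k hk; obtain ⟨j, rfl⟩ : ∃ j, k = j+1 := ⟨k-1, by omega⟩; rfl
  | succ p ih =>
    intro k hk
    obtain ⟨j, rfl⟩ : ∃ j, k = j+1 := ⟨k-1, by omega⟩
    show stirS p j + (j+1) * stirS p (j+1) = 0
    rw [ih j (by omega), ih (j+1) (by omega)]
    simp

lemma mul_descFactorial (ℓ k : ℕ) :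
    ℓ * ℓ.descFactorial k = ℓ.descFactorial (k+1) + k * ℓ.descFactorial k := by
  rcases le_or_gt k ℓ with h | h
  · rw [Nat.descFactorial_succ, ← Nat.add_mul, Nat.sub_add_cancel h]
  · rw [Nat.descFactorial_of_lt h, Nat.descFactorial_of_lt (by omega)]
    simp

lemma stir_sum (p ℓ : ℕ) :
    ∑ k ∈ Finset.range (p+1), stirS p k * ℓ.descFactorial k = ℓ ^ p := by
  induction p with
  | zero => simp [stirS]
  | succ p ih =>
    rw [pow_succ, ← ih, Finset.sum_mul]
    rw [Finset.sum_range_succ' _ (p+1)]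
    have h0 : stirS (p+1) 0 * ℓ.descFactorial 0 = 0 := by rfl
    rw [h0, Nat.add_zero]
    have hterm : ∀ k, stirS (p+1) (k+1) * ℓ.descFactorial (k+1)
        = stirS p k * ℓ.descFactorial (k+1) + (k+1) * stirS p (k+1) * ℓ.descFactorial (k+1) := by
      intro k
      show (stirS p k + (k+1) * stirS p (k+1)) * _ = _
      ring
    rw [Finset.sum_congr rfl (fun k _ => hterm k), Finset.sum_add_distrib]
    have hright : ∑ k ∈ Finset.range (p+1), (k+1) * stirS p (k+1) * ℓ.descFactorial (k+1)
        = ∑ k ∈ Finset.range (p+1), stirS p k * ℓ.descFactorial k * k := by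
      rw [show ∑ k ∈ Finset.range (p+1), stirS p k * ℓ.descFactorial k * k
          = ∑ k ∈ Finset.range (p+2), stirS p k * ℓ.descFactorial k * k from by
        rw [Finset.sum_range_succ (fun k => stirS p k * ℓ.descFactorial k * k) (p+1),
          stirS_eq_zero p (p+1) (by omega)]
        simp]
      rw [Finset.sum_range_succ' (fun k => stirS p k * ℓ.descFactorial k * k) (p+1)]
      simp [mul_comm, mul_left_comm, mul_assoc]
    rw [hright]
    rw [← Finset.sum_add_distrib]
    apply Finset.sum_congr rfl
    intro k _
    rw [show stirS p k * ℓ.descFactorial k * ℓ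
        = stirS p k * (ℓ * ℓ.descFactorial k) from by ring, mul_descFactorial]
    ring

lemma prod_choose (s k ℓ : ℕ) :
    (ℓ+s).choose s * ℓ.choose k = (s+k).choose k * (ℓ+s).choose (s+k) := by
  rcases le_or_gt k ℓ with h | h
  · have := Nat.choose_mul (n := ℓ+s) (k := s+k) (show s ≤ s+k by omega)
    rw [show ℓ+s-s = ℓ by omega, show s+k-s = k by omega] at this
    rw [Nat.choose_symm_add, mul_comm] at this
    exact this.symm
  · rw [Nat.choose_eq_zero_of_lt h, Nat.choose_eq_zero_of_lt (by omega : ℓ+s < s+k)]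
    simp


/-- For positive integers `n, r, p`,
`∑_{ℓ=1}^n ℓ^p H_ℓ^{(r)} = A(p,r,n) H_n^{(r)} - B(p,r,n)`. -/
theorem sum_pow_mul_hyp (n r p : ℕ) (hn : 1 ≤ n) (hr : 1 ≤ r) (hp : 1 ≤ p) :
    ∑ ℓ ∈ Finset.Icc 1 n, (ℓ : ℝ) ^ p * hyp r ℓ =
      Acoef p r n * hyp r n - Bcoef p r n := by
  obtain ⟨s, rfl⟩ : ∃ s, r = s+1 := ⟨r-1, by omega⟩
  have hch : ((n+s).choose s : ℝ) ≠ 0 :=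
    Nat.cast_ne_zero.mpr (Nat.choose_pos (Nat.le_add_left s n)).ne'
  have hL : ∀ ℓ : ℕ, (ℓ:ℝ)^p * hyp (s+1) ℓ
      = ∑ k ∈ Finset.range (p+1),
          (stirS p k : ℝ) * (Nat.factorial k : ℝ) * ((s+k).choose k : ℝ)
            * (((ℓ+s).choose (s+k) : ℝ) * hg s ℓ) := by
    intro ℓ
    rw [hyp_closed s ℓ]
    have hpow : ((ℓ:ℝ))^p
        = ∑ k ∈ Finset.range (p+1), (stirS p k : ℝ) * (ℓ.descFactorial k : ℝ) := by
      exact_mod_cast (congrArg (Nat.cast : ℕ → ℝ) (stir_sum p ℓ)).symm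
    rw [hpow, Finset.sum_mul]
    apply Finset.sum_congr rfl
    intro k _
    have h2 : ((ℓ.descFactorial k : ℕ) : ℝ) = (Nat.factorial k : ℝ) * (ℓ.choose k : ℝ) := by
      exact_mod_cast congrArg (Nat.cast : ℕ → ℝ) (Nat.descFactorial_eq_factorial_mul_choose ℓ k)
    have h3 : ((ℓ+s).choose s : ℝ) * (ℓ.choose k : ℝ)
        = ((s+k).choose k : ℝ) * ((ℓ+s).choose (s+k) : ℝ) := by
      exact_mod_cast congrArg (Nat.cast : ℕ → ℝ) (prod_choose s k ℓ)
    rw [h2]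
    linear_combination ((stirS p k : ℝ) * (Nat.factorial k : ℝ) * hg s ℓ) * h3
  rw [Finset.sum_congr rfl (fun ℓ _ => hL ℓ), Finset.sum_comm]
  have hswap : ∀ k, ∑ ℓ ∈ Finset.Icc 1 n,
      (stirS p k : ℝ) * (Nat.factorial k : ℝ) * ((s+k).choose k : ℝ)
        * (((ℓ+s).choose (s+k) : ℝ) * hg s ℓ)
      = (stirS p k : ℝ) * (Nat.factorial k : ℝ) * ((s+k).choose k : ℝ)
        * (((s+1+n).choose (s+1+k) : ℝ) * hg s n
            - (1/((s:ℝ)+1+k)) * ((s+n).choose (s+1+k) : ℝ)) := by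
    intro k
    rw [← Finset.mul_sum, key_sum s k n]
  rw [Finset.sum_congr rfl (fun k _ => hswap k)]
  rw [hyp_closed s n, Acoef, Bcoef, Finset.sum_mul, ← Finset.sum_sub_distrib]
  apply Finset.sum_congr rfl
  intro k _
  rw [show n + (s+1) - 1 = n + s from by omega, show s + 1 - 1 = s from by omega,
    show (s+1) + k - 1 = s + k from by omega, show s + 1 + n - 1 = s + n from by omega]
  have h1 : ((s:ℝ)+1+k) ≠ 0 := by positivity
  push_cast
  field_simp
end

section
/- For a real number $q$ with $q > 0$ and $q \ne 1$, and for all positive integers $n$ and $r$, $\sum_{\ell=1}^{n} q^{2n-2\ell}\, [\ell]_q\, H_{n-\ell}^{(r)}(q) = H_{n-1}^{(r+2)}(q)$. -/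
lemma qint_eq (q : ℝ) (n : ℕ) : qint q n = (q ^ n - 1) / (q - 1) := by
  rw [qint, ← neg_div_neg_eq]; ring_nf

lemma qhyp_succ (q : ℝ) (r n : ℕ) :
    qhyp q (r + 1) n = ∑ j ∈ Finset.Icc 1 n, q ^ j * qhyp q r j := rfl

lemma qhyp_zero (q : ℝ) (r : ℕ) : qhyp q (r + 1) 0 = 0 := by
  rw [qhyp_succ]; simp

lemma geo_icc (q : ℝ) (hq1 : q ≠ 1) (k m : ℕ) :
    ∑ j ∈ Finset.Icc k m, q ^ j = q ^ k * qint q (m + 1 - k) := by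
  rcases le_or_gt k m with h | h
  · rw [← Finset.Ico_add_one_right_eq_Icc, Finset.sum_Ico_eq_sum_range]
    simp only [pow_add, ← Finset.mul_sum]
    rw [geom_sum_eq hq1, qint_eq]
  · rw [Finset.Icc_eq_empty (by omega), Nat.sub_eq_zero_of_le (by omega)]
    simp [qint]

/-- For `q > 0`, `q ≠ 1` and positive integers `n, r`,
`∑_{ℓ=1}^n q^{2n-2ℓ} [ℓ]_q H_{n-ℓ}^{(r)}(q) = H_{n-1}^{(r+2)}(q)`. -/
theorem sum_backward_qint_mul_qhyp_eq_qhyp (q : ℝ) (hq : 0 < q) (hq1 : q ≠ 1) (n r : ℕ)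
    (hn : 1 ≤ n) (hr : 1 ≤ r) :
    ∑ ℓ ∈ Finset.Icc 1 n, q ^ (2 * n - 2 * ℓ) * qint q ℓ * qhyp q r (n - ℓ) =
      qhyp q (r + 2) (n - 1) := by
  obtain ⟨s, rfl⟩ : ∃ s, r = s + 1 := ⟨r - 1, (Nat.succ_pred_eq_of_pos hr).symm⟩
  obtain ⟨m, rfl⟩ : ∃ m, n = m + 1 := ⟨n - 1, (Nat.succ_pred_eq_of_pos hn).symm⟩
  have key : qhyp q (s + 1 + 2) (m + 1 - 1)
      = ∑ k ∈ Finset.Icc 1 m, q ^ (2 * k) * qint q (m + 1 - k) * qhyp q (s + 1) k := by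
    have h1 : qhyp q (s + 1 + 2) m
        = ∑ j ∈ Finset.Icc 1 m, ∑ k ∈ Finset.Icc 1 j,
            q ^ j * (q ^ k * qhyp q (s + 1) k) := by
      rw [show s + 1 + 2 = (s + 2) + 1 from rfl, qhyp_succ]
      exact Finset.sum_congr rfl fun j _ => by rw [qhyp_succ, Finset.mul_sum]
    rw [show m + 1 - 1 = m from rfl, h1]
    rw [Finset.sum_comm' (t' := Finset.Icc 1 m) (s' := fun k => Finset.Icc k m)
      (fun j k => by simp only [Finset.mem_Icc]; omega)]
    refine Finset.sum_congr rfl fun k hk => ?_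
    rw [← Finset.sum_mul, geo_icc q hq1 k m, two_mul, pow_add]
    ring
  rw [key]
  rw [Finset.sum_Icc_succ_top (by omega : 1 ≤ m + 1)]
  rw [show m + 1 - (m + 1) = 0 from by omega, qhyp_zero, mul_zero, add_zero]
  refine Finset.sum_nbij' (fun ℓ => m + 1 - ℓ) (fun k => m + 1 - k) ?_ ?_ ?_ ?_ ?_
  · intro a ha; simp only [Finset.mem_Icc] at *; omega
  · intro a ha; simp only [Finset.mem_Icc] at *; omega
  · intro a ha; simp only [Finset.mem_Icc] at *; omega
  · intro a ha; simp only [Finset.mem_Icc] at *; omega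
  · intro a ha
    simp only [Finset.mem_Icc] at ha
    rw [show 2 * (m + 1) - 2 * a = 2 * (m + 1 - a) from by omega,
      show m + 1 - (m + 1 - a) = a from by omega]
end
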